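/- Let n, d be positive integers and let A be an n × n matrix with entries in {0,1} such that every row of A has exactly d ones and every column of A has exactly d ones. Let Γ_A be the simple graph on the column indices of A in which two distinct columns j, k are adjacent if and only if the number of rows i with A_{i,j} = A_{i,k} = 1 equals d − 1. Assume Γ_A is connected. Then for every nonempty set S of column indices, the number of rows i for which A_{i,j} = 1 for at least one j ∈ S is at least min{n, d + |S| − 1}. -/

import Mathlib

open Finset

/-- The graph `Γ_A` on the column indices of a 0/1-matrix `A` (encoded with `Bool` entries):
two distinct columns `j, k` are adjacent iff the number of rows `i` with
`A i j = A i k = 1` equals `d - 1`. -/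
def gammaA (n d : ℕ) (A : Fin n → Fin n → Bool) : SimpleGraph (Fin n) where
  Adj j k := j ≠ k ∧ (univ.filter (fun i => A i j ∧ A i k)).card = d - 1
  symm := by
    constructor
    rintro j k ⟨hjk, hcard⟩
    refine ⟨hjk.symm, ?_⟩
    rw [← hcard]
    congr 1
    ext i
    simp [and_comm]
  loopless := ⟨fun j h => h.1 rfl⟩

/-- If every column is contained (as a row set) in `R`, then `R` is everything. -/
lemma auxFull (n d : ℕ) (hd : 0 < d) (A : Fin n → Fin n → Bool)
    (hrow : ∀ i : Fin n, (univ.filter (fun j => A i j)).card = d)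
    (R : Finset (Fin n))
    (h : univ.filter (fun j => univ.filter (fun i => A i j) ⊆ R) = univ) :
    R = univ := by
  apply Finset.eq_univ_iff_forall.2
  intro i
  have hne : (univ.filter (fun j => A i j)).Nonempty := by
    rw [← Finset.card_pos, hrow i]; exact hd
  obtain ⟨j, hj⟩ := hne
  have hj' : A i j := by simpa using (Finset.mem_filter.1 hj).2
  have hjS : j ∈ univ.filter (fun j => univ.filter (fun i => A i j) ⊆ R) := by
    rw [h]; exact mem_univ j
  exact (Finset.mem_filter.1 hjS).2 (by simp [hj'])

lemma keyLemma (n d : ℕ) (hd : 0 < d) (A : Fin n → Fin n → Bool)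
    (hrow : ∀ i : Fin n, (univ.filter (fun j => A i j)).card = d)
    (hcol : ∀ j : Fin n, (univ.filter (fun i => A i j)).card = d)
    (hconn : (gammaA n d A).Connected) :
    ∀ m : ℕ, ∀ R : Finset (Fin n),
      n - (univ.filter (fun j => univ.filter (fun i => A i j) ⊆ R)).card ≤ m →
      (univ.filter (fun j => univ.filter (fun i => A i j) ⊆ R)).Nonempty →
      min n (d + (univ.filter (fun j => univ.filter (fun i => A i j) ⊆ R)).card - 1)
        ≤ R.card := by
  intro m
  induction m with
  | zero =>
    intro R hm _
    have hle : (univ.filter (fun j => univ.filter (fun i => A i j) ⊆ R)).card ≤ n := by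
      simpa using Finset.card_le_univ
        (univ.filter (fun j => univ.filter (fun i => A i j) ⊆ R))
    have hSu : univ.filter (fun j => univ.filter (fun i => A i j) ⊆ R) = univ := by
      apply Finset.eq_univ_of_card
      simp only [Fintype.card_fin]
      omega
    have hR := auxFull n d hd A hrow R hSu
    rw [hR, card_univ, Fintype.card_fin]
    exact min_le_left _ _
  | succ m ih =>
    intro R hm hne
    by_cases hSu : univ.filter (fun j => univ.filter (fun i => A i j) ⊆ R) = univ
    · have hR := auxFull n d hd A hrow R hSu
      rw [hR, card_univ, Fintype.card_fin]
      exact min_le_left _ _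
    · -- S_R is a proper nonempty subset
      obtain ⟨k₀, hk₀⟩ : ∃ x, x ∉ univ.filter (fun j => univ.filter (fun i => A i j) ⊆ R) := by
        by_contra h
        push_neg at h
        exact hSu (Finset.eq_univ_iff_forall.2 h)
      obtain ⟨j₀, hj₀⟩ := hne
      -- R is proper: otherwise S_R = univ
      have hRu : R ≠ univ := by
        intro h
        apply hSu
        apply Finset.eq_univ_iff_forall.2
        intro j
        simp [h]
      obtain ⟨i₁, hi₁⟩ : ∃ x, x ∉ R := by
        by_contra h
        push_neg at h
        exact hRu (Finset.eq_univ_iff_forall.2 h)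
      -- columns with a one in row i₁ are not in S_R, so S_R.card + d ≤ n
      have hdisj : univ.filter (fun j => A i₁ j)
          ⊆ (univ.filter (fun j => univ.filter (fun i => A i j) ⊆ R))ᶜ := by
        intro j hj
        simp only [Finset.mem_compl, Finset.mem_filter, Finset.mem_univ, true_and] at hj ⊢
        intro hsub
        exact hi₁ (hsub (by simp [hj]))
      have hub : d + (univ.filter (fun j => univ.filter (fun i => A i j) ⊆ R)).card ≤ n := by
        have := Finset.card_le_card hdisj
        rw [hrow i₁, Finset.card_compl, Fintype.card_fin] at this
        have hle : (univ.filter (fun j => univ.filter (fun i => A i j) ⊆ R)).card ≤ n := by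
          simpa using Finset.card_le_univ
            (univ.filter (fun j => univ.filter (fun i => A i j) ⊆ R))
        omega
      -- find a boundary edge of Γ_A
      obtain ⟨p⟩ := hconn.preconnected j₀ k₀
      obtain ⟨e, -, hefst, hesnd⟩ := p.exists_boundary_dart
        (↑(univ.filter (fun j => univ.filter (fun i => A i j) ⊆ R)) : Set (Fin n))
        (by simpa using hj₀) (by simpa using hk₀)
      set j := e.fst with hjdef
      set k := e.snd with hkdef
      obtain ⟨hjk, hcard'⟩ : j ≠ k ∧
          (univ.filter (fun i => A i j ∧ A i k)).card = d - 1 := e.adj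
      have hjS : j ∈ univ.filter (fun j => univ.filter (fun i => A i j) ⊆ R) := by
        simpa using hefst
      have hkS : k ∉ univ.filter (fun j => univ.filter (fun i => A i j) ⊆ R) := by
        simpa using hesnd
      have hCjR : univ.filter (fun i => A i j) ⊆ R := (Finset.mem_filter.1 hjS).2
      have hCkR : ¬ univ.filter (fun i => A i k) ⊆ R := by
        intro h; exact hkS (Finset.mem_filter.2 ⟨mem_univ _, h⟩)
      set Cj := univ.filter (fun i => A i j) with hCj
      set Ck := univ.filter (fun i => A i k) with hCk
      have hinter : univ.filter (fun i => A i j ∧ A i k) = Cj ∩ Ck := by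
        ext i; simp [hCj, hCk, Finset.mem_inter]
      have hIcard : (Cj ∩ Ck).card = d - 1 := by rw [← hinter]; exact hcard'
      have hCkcard : Ck.card = d := hcol k
      have hsd : (Ck \ (Cj ∩ Ck)).card = 1 := by
        rw [Finset.card_sdiff_of_subset Finset.inter_subset_right, hCkcard, hIcard]
        omega
      have hsub2 : Ck \ R ⊆ Ck \ (Cj ∩ Ck) := by
        intro i hi
        rw [Finset.mem_sdiff] at hi ⊢
        exact ⟨hi.1, fun hmem => hi.2 (hCjR (Finset.mem_of_mem_inter_left hmem))⟩
      have hne2 : (Ck \ R).Nonempty := Finset.sdiff_nonempty.2 hCkR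
      have hone : (Ck \ R).card = 1 := by
        have h1 := Finset.card_le_card hsub2
        have h2 := Finset.card_pos.2 hne2
        omega
      obtain ⟨i₀, hi₀⟩ := Finset.card_eq_one.1 hone
      have hi₀R : i₀ ∉ R := by
        have : i₀ ∈ Ck \ R := by rw [hi₀]; exact Finset.mem_singleton_self i₀
        exact (Finset.mem_sdiff.1 this).2
      have hCkins : Ck ⊆ insert i₀ R := by
        intro i hi
        by_cases hiR : i ∈ R
        · exact Finset.mem_insert_of_mem hiR
        · have : i ∈ Ck \ R := Finset.mem_sdiff.2 ⟨hi, hiR⟩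
          rw [hi₀] at this
          rw [Finset.mem_singleton.1 this]
          exact Finset.mem_insert_self _ _
      -- the closure grows
      have hkS' : k ∈ univ.filter (fun j => univ.filter (fun i => A i j) ⊆ insert i₀ R) :=
        Finset.mem_filter.2 ⟨mem_univ _, hCkins⟩
      have hmono : insert k (univ.filter (fun j => univ.filter (fun i => A i j) ⊆ R))
          ⊆ univ.filter (fun j => univ.filter (fun i => A i j) ⊆ insert i₀ R) := by
        intro x hx
        rcases Finset.mem_insert.1 hx with h | h
        · rw [h]; exact hkS'
        · obtain ⟨-, hs⟩ := Finset.mem_filter.1 h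
          exact Finset.mem_filter.2 ⟨mem_univ _,
            hs.trans (Finset.subset_insert _ _)⟩
      have hgrow : (univ.filter (fun j => univ.filter (fun i => A i j) ⊆ R)).card + 1
          ≤ (univ.filter (fun j => univ.filter (fun i => A i j) ⊆ insert i₀ R)).card := by
        have := Finset.card_le_card hmono
        rwa [Finset.card_insert_of_notMem hkS] at this
      have hins : (insert i₀ R).card = R.card + 1 := Finset.card_insert_of_notMem hi₀R
      have hIH := ih (insert i₀ R) (by omega)
        ⟨k, hkS'⟩
      rw [hins] at hIH
      omega

theorem stmt2 (n d : ℕ) (hn : 0 < n) (hd : 0 < d)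
    (A : Fin n → Fin n → Bool)
    (hrow : ∀ i : Fin n, (univ.filter (fun j => A i j)).card = d)
    (hcol : ∀ j : Fin n, (univ.filter (fun i => A i j)).card = d)
    (hconn : (gammaA n d A).Connected) :
    ∀ S : Finset (Fin n), S.Nonempty →
      min n (d + S.card - 1) ≤ (univ.filter (fun i => ∃ j ∈ S, A i j)).card := by
  intro S hS
  set R := univ.filter (fun i => ∃ j ∈ S, A i j) with hR
  have hsubS : S ⊆ univ.filter (fun j => univ.filter (fun i => A i j) ⊆ R) := by
    intro j hj
    refine Finset.mem_filter.2 ⟨mem_univ _, ?_⟩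
    intro i hi
    rw [Finset.mem_filter] at hi
    exact Finset.mem_filter.2 ⟨mem_univ _, ⟨j, hj, hi.2⟩⟩
  have hne : (univ.filter (fun j => univ.filter (fun i => A i j) ⊆ R)).Nonempty :=
    hS.mono hsubS
  have hkey := keyLemma n d hd A hrow hcol hconn n R (by omega) hne
  have hcardle := Finset.card_le_card hsubS
  omega
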